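/- arXiv:2507.14530 — 2 statements merged into one kernel-verified Lean document; each statement's English description precedes it below -/
import Mathlib

section
/- Let F, Γ and Γ' be finite simple graphs, let (X,p,Γ') be an F-graph bundle and let f: Γ → Γ' be a morphism of graphs. Then the pullback along f of (X,p,Γ') is an F-graph bundle; that is, f^*p: f^*X → Γ is a surjective graph morphism, for each vertex v of Γ the fiber (f^*p)^{-1}(v) is isomorphic to F, the graph obtained from f^*X by deleting the type I edges together with the induced map to Γ is a |V_F|-fold covering of Γ, and the bijections between fibers over adjacent vertices induced by this covering are isomorphisms of graphs. -/
open Classical Matrix Kronecker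

universe u

noncomputable section

/-- A morphism of graphs: adjacent vertices are mapped to adjacent or equal vertices. -/
def IsGraphMorphism {V W : Type*} (G : SimpleGraph V) (H : SimpleGraph W) (f : V → W) : Prop :=
  ∀ ⦃a b : V⦄, G.Adj a b → H.Adj (f a) (f b) ∨ f a = f b

/-- The graph `X̃` obtained from `X` by deleting the edges lying inside fibers of `p`. -/
def delFiberEdges {VX VB : Type*} (X : SimpleGraph VX) (p : VX → VB) : SimpleGraph VX where
  Adj a b := X.Adj a b ∧ p a ≠ p b
  symm := by
    constructor
    intro a b h
    exact ⟨h.1.symm, Ne.symm h.2⟩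
  loopless := by
    constructor
    intro a h
    exact X.irrefl h.1

/-- `(X, p, B)` is an `F`-graph bundle. -/
structure IsGraphBundle {VF VX VB : Type*} (F : SimpleGraph VF) (X : SimpleGraph VX)
    (p : VX → VB) (B : SimpleGraph VB) : Prop where
  morphism : IsGraphMorphism X B p
  surj : Function.Surjective p
  fiber_iso : ∀ v : VB, Nonempty ((X.induce (p ⁻¹' {v})) ≃g F)
  fiber_card : ∀ v : VB, Nat.card (p ⁻¹' {v}) = Nat.card VF
  covering : ∀ x : VX,
    Set.BijOn p ((delFiberEdges X p).neighborSet x) (B.neighborSet (p x))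
  transport : ∀ ⦃v w : VB⦄, B.Adj v w →
    ∃ ψ : (X.induce (p ⁻¹' {v})) ≃g (X.induce (p ⁻¹' {w})),
      ∀ x : (p ⁻¹' {v}), X.Adj x.1 (ψ x).1

/-- Vertices of the pullback graph. -/
abbrev PullbackVert {VB VX VC : Type*} (f : VB → VC) (p : VX → VC) :=
  {a : VB × VX // f a.1 = p a.2}

/-- The total space of the pullback of the bundle `(X, p, C)` along `f : B → C`. -/
def pullbackGraph {VB VX VC : Type*} (B : SimpleGraph VB) (X : SimpleGraph VX)
    (f : VB → VC) (p : VX → VC) (C : SimpleGraph VC) :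
    SimpleGraph (PullbackVert f p) where
  Adj a b :=
    (a.1.1 = b.1.1 ∧ X.Adj a.1.2 b.1.2) ∨
    (B.Adj a.1.1 b.1.1 ∧ f a.1.1 = f b.1.1 ∧ a.1.2 = b.1.2) ∨
    (B.Adj a.1.1 b.1.1 ∧ C.Adj (f a.1.1) (f b.1.1) ∧ X.Adj a.1.2 b.1.2)
  symm := by
    constructor
    rintro a b (⟨h1, h2⟩ | ⟨h1, h2, h3⟩ | ⟨h1, h2, h3⟩)
    · exact Or.inl ⟨h1.symm, h2.symm⟩
    · exact Or.inr (Or.inl ⟨h1.symm, h2.symm, h3.symm⟩)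
    · exact Or.inr (Or.inr ⟨h1.symm, h2.symm, h3.symm⟩)
  loopless := by
    constructor
    rintro a (⟨_, h⟩ | ⟨h, _⟩ | ⟨h, _⟩)
    · exact X.irrefl h
    · exact B.irrefl h
    · exact B.irrefl h

/-- The projection of the pullback bundle. -/
def pullbackProj {VB VX VC : Type*} (f : VB → VC) (p : VX → VC) :
    PullbackVert f p → VB := fun a => a.1.1

/-- Two graph bundles over the same base are equivalent. -/
def BundlesEquiv {VX VY VB : Type*} (X : SimpleGraph VX) (p : VX → VB)
    (Y : SimpleGraph VY) (q : VY → VB) : Prop :=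
  ∃ Φ : X ≃g Y, ∀ x, q (Φ x) = p x

/-- A graph bundle is trivial if it is equivalent to `(B □ F, π, B)` with `π (v, f) = v`. -/
def IsTrivialBundle {VF VX VB : Type*} (F : SimpleGraph VF) (X : SimpleGraph VX)
    (p : VX → VB) (B : SimpleGraph VB) : Prop :=
  ∃ Φ : X ≃g (B.boxProd F), ∀ x, (Φ x).1 = p x

/-- An `F`-voltage function on `B`. -/
structure VoltageFunction {VB VF : Type*} (B : SimpleGraph VB) (F : SimpleGraph VF) where
  volt : VB → VB → (F ≃g F)
  volt_symm : ∀ v w, volt w v = (volt v w).symm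

/-- The graph `B ×_φ F` associated with a voltage function. -/
def voltageGraph {VB VF : Type*} (B : SimpleGraph VB) (F : SimpleGraph VF)
    (φ : VoltageFunction B F) : SimpleGraph (VB × VF) where
  Adj a b := (B.Adj a.1 b.1 ∧ b.2 = φ.volt a.1 b.1 a.2) ∨ (a.1 = b.1 ∧ F.Adj a.2 b.2)
  symm := by
    constructor
    rintro a b (⟨h1, h2⟩ | ⟨h1, h2⟩)
    · refine Or.inl ⟨h1.symm, ?_⟩
      rw [φ.volt_symm, h2, RelIso.symm_apply_apply]
    · exact Or.inr ⟨h1.symm, h2.symm⟩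
  loopless := by
    constructor
    rintro a (⟨h, _⟩ | ⟨_, h⟩)
    · exact B.irrefl h
    · exact F.irrefl h

/-- The pullback of a voltage function along a graph morphism. -/
def pullbackVoltage {VB VC VF : Type*} (B : SimpleGraph VB) (C : SimpleGraph VC)
    (F : SimpleGraph VF) (f : VB → VC) (φ : VoltageFunction C F) : VoltageFunction B F where
  volt v w := if f v = f w then RelIso.refl _ else φ.volt (f v) (f w)
  volt_symm v w := by
    try dsimp only
    by_cases h : f v = f w
    · rw [if_pos h, if_pos h.symm]
      rfl
    · rw [if_neg h, if_neg (fun hh : f w = f v => h hh.symm), φ.volt_symm]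
/-- Adjacency matrix (over `ℝ`). -/
def adjMat {V : Type*} (G : SimpleGraph V) : Matrix V V ℝ :=
  Matrix.of fun a b => if G.Adj a b then 1 else 0

/-- Permutation matrix of an automorphism of `F`. -/
def permMat {VF : Type*} {F : SimpleGraph VF} (ψ : F ≃g F) : Matrix VF VF ℝ :=
  Matrix.of fun a b => if b = ψ a then 1 else 0

/-- The matrix `M_f` of a map of vertex sets. -/
def morMat {VB VC : Type*} (f : VB → VC) : Matrix VC VB ℝ :=
  Matrix.of fun c b => if f b = c then 1 else 0

/-- The matrix `A_B(ψ)` of a voltage function. -/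
def voltMat {VB VF : Type*} {B : SimpleGraph VB} {F : SimpleGraph VF}
    (φ : VoltageFunction B F) (ψ : F ≃g F) : Matrix VB VB ℝ :=
  Matrix.of fun v w => if B.Adj v w ∧ φ.volt v w = ψ then 1 else 0

instance instFiniteGraphIso {VF : Type*} [Finite VF] (F : SimpleGraph VF) :
    Finite (F ≃g F) :=
  Finite.of_injective (fun ψ => (ψ.toEquiv : VF ≃ VF)) (fun a b h => by
    cases a; cases b; simpa using h)

noncomputable instance instFintypeGraphIso {VF : Type*} [Finite VF] (F : SimpleGraph VF) :
    Fintype (F ≃g F) :=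
  Fintype.ofFinite _

/-- The image graph `f(Γ)` of a graph morphism. -/
def imageGraph {VB VC : Type*} (B : SimpleGraph VB) (f : VB → VC) :
    SimpleGraph (Set.range f) where
  Adj a b := a.1 ≠ b.1 ∧ ∃ v w, B.Adj v w ∧ f v = a.1 ∧ f w = b.1
  symm := by
    constructor
    rintro a b ⟨hne, v, w, h, hv, hw⟩
    exact ⟨hne.symm, w, v, h.symm, hw, hv⟩
  loopless := by
    constructor
    rintro a ⟨hne, -⟩
    exact hne rfl

/-- The Cayley graph of a group with respect to a set of generators. -/
def cayleyGraph {G : Type*} [Group G] (S : Set G) : SimpleGraph G :=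
  SimpleGraph.fromRel (fun x y => ∃ s ∈ S, y = x * s)

/-- The subdirect product of two groups with amalgamated factor group `B`. -/
def subdirSubgroup {A₁ A₂ B : Type*} [Group A₁] [Group A₂] [Group B]
    (φ₁ : A₁ →* B) (φ₂ : A₂ →* B) : Subgroup (A₁ × A₂) where
  carrier := {a : A₁ × A₂ | φ₁ a.1 = φ₂ a.2}
  one_mem' := by simp
  mul_mem' := by
    intro a b ha hb
    simp only [Set.mem_setOf_eq, Prod.fst_mul, Prod.snd_mul, _root_.map_mul] at *
    rw [ha, hb]
  inv_mem' := by
    intro a ha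
    simp only [Set.mem_setOf_eq, Prod.fst_inv, Prod.snd_inv, _root_.map_inv] at *
    rw [ha]
/-- The fiber of the pullback bundle over `v` is isomorphic to the fiber of the original
bundle over `f v`. -/
def pbFiberIso {VB VX VC : Type*} (B : SimpleGraph VB) (X : SimpleGraph VX)
    (f : VB → VC) (p : VX → VC) (C : SimpleGraph VC) (v : VB) :
    ((pullbackGraph B X f p C).induce ((pullbackProj f p) ⁻¹' {v})) ≃g
      (X.induce (p ⁻¹' {f v})) where
  toFun a := ⟨a.1.1.2, by
    have h2 : a.1.1.1 = v := a.2
    have h1 : f a.1.1.1 = p a.1.1.2 := a.1.2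
    simp only [Set.mem_preimage, Set.mem_singleton_iff]
    rw [← h1, h2]⟩
  invFun x := ⟨⟨(v, x.1), (x.2 : p x.1 = f v).symm⟩, rfl⟩
  left_inv a := by
    obtain ⟨⟨⟨v', x⟩, hpx⟩, hv'⟩ := a
    have : v' = v := hv'
    subst this
    rfl
  right_inv x := rfl
  map_rel_iff' := by
    rintro ⟨⟨⟨v1, x1⟩, h1⟩, hm1⟩ ⟨⟨⟨v2, x2⟩, h2⟩, hm2⟩
    have hv1 : v1 = v := hm1
    have hv2 : v2 = v := hm2
    constructor
    · intro h
      exact Or.inl ⟨hv1.trans hv2.symm, h⟩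
    · rintro (⟨-, h⟩ | ⟨h, -⟩ | ⟨h, -⟩)
      · exact h
      · have h' : B.Adj v1 v2 := h
        rw [hv1, hv2] at h'
        exact absurd h' B.irrefl
      · have h' : B.Adj v1 v2 := h
        rw [hv1, hv2] at h'
        exact absurd h' B.irrefl

/-- the pullback along `f` of an `F`-graph bundle is an `F`-graph bundle. -/
theorem pullback_isGraphBundle
    {VF VX VB VC : Type*} [Fintype VF] [Fintype VX] [Fintype VB] [Fintype VC]
    (F : SimpleGraph VF) (X : SimpleGraph VX) (C : SimpleGraph VC) (B : SimpleGraph VB)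
    (p : VX → VC) (f : VB → VC)
    (hX : IsGraphBundle F X p C) (hf : IsGraphMorphism B C f) :
    IsGraphBundle F (pullbackGraph B X f p C) (pullbackProj f p) B := by
  classical
  constructor
  · -- morphism
    rintro a b (⟨h1, -⟩ | ⟨h1, -⟩ | ⟨h1, -⟩)
    · exact Or.inr h1
    · exact Or.inl h1
    · exact Or.inl h1
  · -- surjective
    intro v
    obtain ⟨x, hx⟩ := hX.surj (f v)
    exact ⟨⟨(v, x), hx.symm⟩, rfl⟩
  · -- fiber_iso
    intro v
    obtain ⟨e⟩ := hX.fiber_iso (f v)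
    exact ⟨(pbFiberIso B X f p C v).trans e⟩
  · -- fiber_card
    intro v
    rw [← hX.fiber_card (f v)]
    exact Nat.card_congr (pbFiberIso B X f p C v).toEquiv
  · -- covering
    rintro ⟨⟨v, x⟩, hpx⟩
    have hpx' : p x = f v := hpx.symm
    refine ⟨?_, ?_, ?_⟩
    · -- MapsTo
      rintro ⟨⟨w, y⟩, hpy⟩ hmem
      obtain ⟨hadj, hne⟩ := hmem
      have hne' : v ≠ w := hne
      rcases hadj with ⟨h1, -⟩ | ⟨h1, -⟩ | ⟨h1, -⟩
      · exact absurd h1 hne'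
      · exact h1
      · exact h1
    · -- InjOn
      rintro ⟨⟨w, y⟩, hpy⟩ ⟨hadj, hne⟩ ⟨⟨w', y'⟩, hpy'⟩ ⟨hadj', hne'⟩ heq
      have hww : w = w' := heq
      subst hww
      have hnv : v ≠ w := hne
      refine Subtype.ext (Prod.ext rfl ?_)
      by_cases hfvw : f v = f w
      · have hy : y = x := by
          rcases hadj with ⟨h1, -⟩ | ⟨-, -, h3⟩ | ⟨-, h2, -⟩
          · exact absurd h1 hnv
          · exact h3.symm
          · rw [hfvw] at h2; exact absurd h2 C.irrefl
        have hy' : y' = x := by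
          rcases hadj' with ⟨h1, -⟩ | ⟨-, -, h3⟩ | ⟨-, h2, -⟩
          · exact absurd h1 hnv
          · exact h3.symm
          · rw [hfvw] at h2; exact absurd h2 C.irrefl
        show y = y'
        rw [hy, hy']
      · have hy : X.Adj x y := by
          rcases hadj with ⟨h1, -⟩ | ⟨-, h2, -⟩ | ⟨-, -, h3⟩
          · exact absurd h1 hnv
          · exact absurd h2 hfvw
          · exact h3
        have hy' : X.Adj x y' := by
          rcases hadj' with ⟨h1, -⟩ | ⟨-, h2, -⟩ | ⟨-, -, h3⟩
          · exact absurd h1 hnv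
          · exact absurd h2 hfvw
          · exact h3
        have hmem1 : y ∈ (delFiberEdges X p).neighborSet x :=
          ⟨hy, by rw [hpx', ← hpy]; exact hfvw⟩
        have hmem2 : y' ∈ (delFiberEdges X p).neighborSet x :=
          ⟨hy', by rw [hpx', ← hpy']; exact hfvw⟩
        exact (hX.covering x).2.1 hmem1 hmem2 (by rw [← hpy, ← hpy'])
    · -- SurjOn
      rintro w hw
      have hvw : B.Adj v w := hw
      by_cases hfvw : f v = f w
      · refine ⟨⟨(w, x), by rw [← hfvw, hpx]⟩, ?_, ?_⟩
        · exact ⟨Or.inr (Or.inl ⟨hvw, hfvw, rfl⟩), hvw.ne⟩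
        · rfl
      · have hC : C.Adj (f v) (f w) := (hf hvw).resolve_right hfvw
        have : f w ∈ C.neighborSet (p x) := by
          rw [hpx']; exact hC
        obtain ⟨y, hymem, hpy⟩ := (hX.covering x).2.2 this
        refine ⟨⟨(w, y), hpy.symm⟩, ?_, ?_⟩
        · exact ⟨Or.inr (Or.inr ⟨hvw, hC, hymem.1⟩), hvw.ne⟩
        · rfl
  · -- transport
    intro v w hvw
    by_cases hfvw : f v = f w
    · have hsets : (p ⁻¹' {f v}) = (p ⁻¹' {f w}) := by rw [hfvw]
      refine ⟨((pbFiberIso B X f p C v).trans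
        { toEquiv := Equiv.setCongr hsets
          map_rel_iff' := Iff.rfl }).trans (pbFiberIso B X f p C w).symm, ?_⟩
      rintro ⟨⟨⟨v', x⟩, hpx⟩, hv'⟩
      have hv'' : v' = v := hv'
      refine Or.inr (Or.inl ⟨?_, ?_, rfl⟩)
      · show B.Adj v' w
        rw [hv'']; exact hvw
      · show f v' = f w
        rw [hv'']; exact hfvw
    · have hC : C.Adj (f v) (f w) := (hf hvw).resolve_right hfvw
      obtain ⟨ψ0, hψ0⟩ := hX.transport hC
      refine ⟨((pbFiberIso B X f p C v).trans ψ0).trans (pbFiberIso B X f p C w).symm, ?_⟩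
      rintro ⟨⟨⟨v', x⟩, hpx⟩, hv'⟩
      have hv'' : v' = v := hv'
      have key := hψ0 ((pbFiberIso B X f p C v) ⟨⟨(v', x), hpx⟩, hv'⟩)
      refine Or.inr (Or.inr ⟨?_, ?_, key⟩)
      · show B.Adj v' w
        rw [hv'']; exact hvw
      · show C.Adj (f v') (f w)
        rw [hv'']; exact hC
end
end

section
/- Let (Xᵢ,pᵢ,Γ) be an Fᵢ-graph bundle for i = 1,2, let Y be a graph, and let αᵢ: Y → Xᵢ be morphisms of graphs such that p₁ ∘ α₁ = p₂ ∘ α₂ and this common composite preserves the edges (adjacent vertices are mapped to adjacent vertices). Then the map α₁ ⊞ α₂: Y → X₁ ⊞ X₂ defined by (α₁ ⊞ α₂)(y) = (α₁(y), α₂(y)) is a morphism of graphs, and composing it with the two projections of X₁ ⊞ X₂ to X₁ and X₂ recovers α₁ and α₂ respectively. -/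
open Classical Matrix Kronecker

universe u

noncomputable section

/-- universal property of the subdirect product of graph bundles. -/
theorem subdir_universal
    {VF₁ VF₂ VX₁ VX₂ VB VY : Type*}
    [Fintype VF₁] [Fintype VF₂] [Fintype VX₁] [Fintype VX₂] [Fintype VB] [Fintype VY]
    (F₁ : SimpleGraph VF₁) (F₂ : SimpleGraph VF₂)
    (X₁ : SimpleGraph VX₁) (X₂ : SimpleGraph VX₂) (B : SimpleGraph VB)
    (Y : SimpleGraph VY)
    (p₁ : VX₁ → VB) (p₂ : VX₂ → VB)
    (h₁ : IsGraphBundle F₁ X₁ p₁ B) (h₂ : IsGraphBundle F₂ X₂ p₂ B)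
    (α₁ : VY → VX₁) (α₂ : VY → VX₂)
    (hα₁ : IsGraphMorphism Y X₁ α₁) (hα₂ : IsGraphMorphism Y X₂ α₂)
    (hcomm : ∀ y, p₁ (α₁ y) = p₂ (α₂ y))
    (hpres : ∀ ⦃y z : VY⦄, Y.Adj y z → B.Adj (p₁ (α₁ y)) (p₁ (α₁ z))) :
    IsGraphMorphism Y (pullbackGraph X₁ X₂ p₁ p₂ B)
      (fun y => ⟨(α₁ y, α₂ y), hcomm y⟩) ∧
    (∀ y, ((⟨(α₁ y, α₂ y), hcomm y⟩ : PullbackVert p₁ p₂)).1.1 = α₁ y) ∧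
    (∀ y, ((⟨(α₁ y, α₂ y), hcomm y⟩ : PullbackVert p₁ p₂)).1.2 = α₂ y) := by
  refine ⟨?_, fun y => rfl, fun y => rfl⟩
  intro y z hyz
  left
  have hB := hpres hyz
  have hne : p₁ (α₁ y) ≠ p₁ (α₁ z) := hB.ne
  have h1 : X₁.Adj (α₁ y) (α₁ z) := by
    rcases hα₁ hyz with h | h
    · exact h
    · exact absurd (congrArg p₁ h) hne
  have h2 : X₂.Adj (α₂ y) (α₂ z) := by
    rcases hα₂ hyz with h | h
    · exact h
    · exact absurd (congrArg p₂ h) (by rw [← hcomm y, ← hcomm z]; exact hne)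
  exact Or.inr (Or.inr ⟨h1, hB, h2⟩)
end
end
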